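/- Let R be an associative unital ring (not necessarily commutative), α : ℤ → R a family of elements, and S_s^k(n) the associated non-commutative Svinin polynomials. Let m ≥ 1 be an integer and let d_{2k} (0 ≤ k ≤ m) and c_{2k+1} (0 ≤ k ≤ m) be central elements of R. Define, for 0 ≤ k ≤ m and n ∈ ℤ, B_{2k+1,n} := c_{2k+1} − Σ_{r=1}^{m−k} d_{2(k+r)} · S_r^r(n+r−1) and P_{2k,n} := Σ_{r=0}^{m−k} d_{2(k+r)} · S_{r+1}^r(n+r−1). Then for every integer 1 ≤ k ≤ m and every n ∈ ℤ, B_{2k−1,n−1} − B_{2k−1,n} − α_n · P_{2k,n+1} + P_{2k,n−1} · α_{n−1} = 0. -/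
import Mathlib


/-- Non-commutative Svinin polynomials: `svinin α s k n` is `S_s^k(n)`, defined by
`S_s^0(n) = 1` and `S_s^k(n) = Σ_{j=0}^{s−1} α_{n−k−j+1} · S_{s−j}^{k−1}(n−j)` for `k ≥ 1`. -/
def svinin {R : Type*} [Ring R] (α : ℤ → R) : ℕ → ℕ → ℤ → R
  | _, 0, _ => 1
  | s, k + 1, n =>
      ∑ j ∈ Finset.range s,
        α (n - ((k : ℤ) + 1) - (j : ℤ) + 1) * svinin α (s - j) k (n - (j : ℤ))

lemma svinin_zero {R : Type*} [Ring R] (α : ℤ → R) (s : ℕ) (n : ℤ) :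
    svinin α s 0 n = 1 := rfl

lemma svinin_succ {R : Type*} [Ring R] (α : ℤ → R) (s k : ℕ) (n : ℤ) :
    svinin α s (k+1) n = ∑ j ∈ Finset.range s,
        α (n - ((k : ℤ) + 1) - (j : ℤ) + 1) * svinin α (s - j) k (n - (j : ℤ)) := rfl

lemma svinin_s_zero {R : Type*} [Ring R] (α : ℤ → R) (k : ℕ) (n : ℤ) :
    svinin α 0 (k+1) n = 0 := by simp [svinin_succ]

lemma svinin_left {R : Type*} [Ring R] (α : ℤ → R) (s k : ℕ) (n : ℤ) :
    svinin α (s+1) (k+1) n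
      = α (n - k) * svinin α (s+1) k n + svinin α s (k+1) (n-1) := by
  rw [svinin_succ, Finset.sum_range_succ', add_comm]
  congr 1
  · simp only [Nat.cast_zero, sub_zero, Nat.sub_zero]
    rw [show n - ((k:ℤ) + 1) + 1 = n - (k:ℤ) by ring]
  · rw [svinin_succ]
    refine Finset.sum_congr rfl fun i hi => ?_
    have h1 : s + 1 - (i+1) = s - i := by omega
    rw [h1]
    push_cast
    congr 1
    · congr 1; ring
    · congr 1; ring

lemma svinin_one {R : Type*} [Ring R] (α : ℤ → R) :
    ∀ (k : ℕ) (n : ℤ), svinin α 1 (k+1) n = svinin α 1 k (n-1) * α n := by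
  intro k
  induction k with
  | zero =>
    intro n
    simp [svinin_succ, svinin_zero]
  | succ k ih =>
    intro n
    rw [svinin_left α 0 (k+1) n, svinin_s_zero, add_zero, ih n,
        svinin_left α 0 k (n-1), svinin_s_zero, add_zero, mul_assoc]
    congr 2
    push_cast
    ring

lemma svinin_diff {R : Type*} [Ring R] (α : ℤ → R) :
    ∀ (k : ℕ) (s : ℕ) (n : ℤ),
      svinin α (s+1) (k+1) n - svinin α s (k+1) n
        = svinin α (s+1) k (n-1) * α (n - s) := by
  intro k
  induction k with
  | zero =>
    intro s n
    rw [svinin_succ α (s+1) 0 n, svinin_succ α s 0 n, Finset.sum_range_succ]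
    simp only [svinin_zero, mul_one]
    rw [add_sub_cancel_left, one_mul]
    congr 1
    push_cast
    ring
  | succ k ih =>
    intro s n
    rw [svinin_succ α (s+1) (k+1) n, svinin_succ α s (k+1) n, Finset.sum_range_succ,
        add_sub_right_comm, ← Finset.sum_sub_distrib]
    push_cast
    have hterm : ∀ j ∈ Finset.range s,
        α (n - ((k:ℤ)+1+1) - j + 1) * svinin α (s+1-j) (k+1) (n - j)
          - α (n - ((k:ℤ)+1+1) - j + 1) * svinin α (s-j) (k+1) (n - j)
        = (α ((n-1) - ((k:ℤ)+1) - j + 1) * svinin α (s+1-j) k ((n-1) - j)) * α (n - s) := by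
      intro j hj
      rw [Finset.mem_range] at hj
      rw [← mul_sub]
      have h1 : s + 1 - j = (s - j) + 1 := by omega
      rw [h1, ih (s-j) (n - j)]
      have h2 : (n : ℤ) - j - (↑(s - j)) = n - s := by
        have : ((s - j : ℕ) : ℤ) = (s:ℤ) - j := by omega
        rw [this]; ring
      rw [h2, ← mul_assoc]
      congr 2
      · congr 1; ring
      · congr 1; ring
    rw [Finset.sum_congr rfl hterm, ← Finset.sum_mul]
    have hlast : α (n - ((k:ℤ)+1+1) - s + 1) * svinin α (s+1-s) (k+1) (n - s)
        = (α ((n-1) - ((k:ℤ)+1) - s + 1) * svinin α (s+1-s) k ((n-1) - s)) * α (n - s) := by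
      have h1 : s + 1 - s = 1 := by omega
      rw [h1, svinin_one α k (n - s), ← mul_assoc]
      congr 2
      · congr 1; ring
      · congr 1; ring
    rw [hlast, ← add_mul, svinin_succ α (s+1) k (n-1), Finset.sum_range_succ]

lemma svinin_key {R : Type*} [Ring R] (α : ℤ → R) (r : ℕ) (n : ℤ) :
    svinin α (r+1) (r+1) (n + r) - svinin α (r+1) (r+1) (n + r - 1)
      - α n * svinin α (r+1) r (n + r) + svinin α (r+1) r (n + r - 2) * α (n - 1) = 0 := by
  have h1 := svinin_left α r r (n + r)
  rw [show (n + (r:ℤ) - r) = n by ring] at h1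
  have h2 := svinin_diff α r r (n + r - 1)
  rw [show (n + (r:ℤ) - 1 - 1) = n + r - 2 by ring,
      show (n + (r:ℤ) - 1 - r) = n - 1 by ring] at h2
  rw [h1, ← h2]
  abel

/-- `Bcoef α m d c k n` is `B_{2k+1,n} = c_{2k+1} − Σ_{r=1}^{m−k} d_{2(k+r)} · S_r^r(n+r−1)`,
where `d j` stands for `d_{2j}` and `c j` stands for `c_{2j+1}`. -/
def Bcoef {R : Type*} [Ring R] (α : ℤ → R) (m : ℕ) (d c : ℕ → R) (k : ℕ) (n : ℤ) : R :=
  c k - ∑ r ∈ Finset.Icc 1 (m - k), d (k + r) * svinin α r r (n + (r : ℤ) - 1)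

/-- `Pcoef α m d k n` is `P_{2k,n} = Σ_{r=0}^{m−k} d_{2(k+r)} · S_{r+1}^r(n+r−1)`,
where `d j` stands for `d_{2j}`. -/
def Pcoef {R : Type*} [Ring R] (α : ℤ → R) (m : ℕ) (d : ℕ → R) (k : ℕ) (n : ℤ) : R :=
  ∑ r ∈ Finset.range (m - k + 1), d (k + r) * svinin α (r + 1) r (n + (r : ℤ) - 1)

/-- For `1 ≤ k ≤ m` and all `n`:
`B_{2k−1,n−1} − B_{2k−1,n} − α_n · P_{2k,n+1} + P_{2k,n−1} · α_{n−1} = 0`. -/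
theorem dPI_system_first_set {R : Type*} [Ring R] (α : ℤ → R)
    (m : ℕ) (hm : 1 ≤ m) (d c : ℕ → R)
    (hd : ∀ k ≤ m, d k ∈ Set.center R) (hc : ∀ k ≤ m, c k ∈ Set.center R)
    (k : ℕ) (hk1 : 1 ≤ k) (hk2 : k ≤ m) (n : ℤ) :
    Bcoef α m d c (k - 1) (n - 1) - Bcoef α m d c (k - 1) n
      - α n * Pcoef α m d k (n + 1) + Pcoef α m d k (n - 1) * α (n - 1) = 0 := by
  unfold Bcoef Pcoef
  have hmk : m - (k - 1) = (m - k) + 1 := by omega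
  rw [hmk]
  have hicc : ∀ g : ℕ → R, ∑ r ∈ Finset.Icc 1 (m-k+1), g r
      = ∑ t ∈ Finset.range (m-k+1), g (1+t) := by
    intro g
    rw [← Finset.Ico_add_one_right_eq_Icc, Finset.sum_Ico_eq_sum_range]
    norm_num
  rw [hicc, hicc, Finset.mul_sum, Finset.sum_mul]
  have generic : ∀ c0 S1 S2 S3 S4 : R, S2 - S1 - S3 + S4 = 0 →
      c0 - S1 - (c0 - S2) - S3 + S4 = 0 := by
    intro c0 S1 S2 S3 S4 h
    have : c0 - S1 - (c0 - S2) - S3 + S4 = S2 - S1 - S3 + S4 := by abel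
    rw [this, h]
  apply generic
  rw [← Finset.sum_sub_distrib, ← Finset.sum_sub_distrib, ← Finset.sum_add_distrib]
  apply Finset.sum_eq_zero
  intro t ht
  rw [Finset.mem_range] at ht
  have hv : k - 1 + (1+t) = k + t := by omega
  have h1 : 1 + t = t + 1 := by omega
  rw [hv, h1]
  have e1 : n + ((t+1:ℕ):ℤ) - 1 = n + t := by push_cast; ring
  have e2 : n - 1 + ((t+1:ℕ):ℤ) - 1 = n + t - 1 := by push_cast; ring
  have e3 : n + 1 + (t:ℤ) - 1 = n + t := by ring
  have e4 : n - 1 + (t:ℤ) - 1 = n + t - 2 := by ring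
  rw [e1, e2, e3, e4]
  have hdt : ∀ x : R, d (k+t) * x = x * d (k+t) :=
    fun x => (hd (k+t) (by omega)).comm x
  have hc3 : α n * (d (k+t) * svinin α (t+1) t (n+t))
      = d (k+t) * (α n * svinin α (t+1) t (n+t)) := by
    rw [← mul_assoc, ← hdt, mul_assoc]
  have hc4 : d (k+t) * svinin α (t+1) t (n+t-2) * α (n-1)
      = d (k+t) * (svinin α (t+1) t (n+t-2) * α (n-1)) := by
    rw [mul_assoc]
  rw [hc3, hc4, ← mul_sub, ← mul_sub, ← mul_add, svinin_key, mul_zero]
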